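/- arXiv:0710.4606 — 3 statements merged into one kernel-verified Lean document; each statement's English description precedes it below -/
import Mathlib

section
/- As a formal power series in two variables, 1/√(1 - 2x - 2y - 2xy + x² + y²) = Σ_{m,n ≥ 0} binom(m+n, m)² xᵐ yⁿ. -/
open MvPowerSeries Nat

/-! Auxiliary development: we show that the power series `W` with coefficients
`binom(m+n,m)²` satisfies `W * W * Δ = 1`, using a formal partial derivative
operator `Dx` and a contiguous relation for the coefficients, and then deduce
`Z = W` by uniqueness. -/

noncomputable def bq (m n : ℕ) : ℚ := ((m+n).choose m : ℚ)^2

lemma bq_symm (m n : ℕ) : bq m n = bq n m := by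
  unfold bq
  rw [add_comm m n]
  congr 2
  rw [← Nat.choose_symm (Nat.le_add_left m n)]
  congr 1
  omega

lemma bq_fact (m n : ℕ) : bq m n = ((m+n)! : ℚ)^2 / (((m)! : ℚ)^2 * ((n)! : ℚ)^2) := by
  unfold bq
  rw [Nat.cast_add_choose, div_pow, mul_pow]

lemma bq_zero_right (m : ℕ) : bq m 0 = 1 := by simp [bq]
lemma bq_zero_left (n : ℕ) : bq 0 n = 1 := by simp [bq]
lemma bq_one_right (m : ℕ) : bq m 1 = ((m:ℚ)+1)^2 := by
  simp [bq, Nat.choose_succ_self_right]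
lemma bq_one_left (n : ℕ) : bq 1 n = ((n:ℚ)+1)^2 := by
  rw [bq_symm, bq_one_right]

lemma bq_fact' (m n : ℕ) : bq m n = (((m+n)! : ℚ) / (((m)! : ℚ) * ((n)! : ℚ)))^2 := by
  rw [bq_fact, div_pow, mul_pow]

set_option maxHeartbeats 1600000 in
lemma key6 (m n : ℕ) :
    (m:ℚ) * bq (2+m) (2+n) - 2*m*bq (1+m) (2+n) - 2*m*bq (2+m) (1+n) - 2*m*bq (1+m) (1+n)
      + m*bq (2+m) n + 2*bq (2+m) (2+n) - 2*bq (1+m) (2+n) - 4*bq (2+m) (1+n) - 2*bq (1+m) (1+n)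
      + m*bq m (2+n) + 2*bq (2+m) n
    = bq (1+m) (2+n) + bq (1+m) (1+n) - bq m (2+n) := by
  have hf : ∀ k : ℕ, ((k)! : ℚ) ≠ 0 := fun k => Nat.cast_ne_zero.2 (Nat.factorial_ne_zero k)
  have hfm := hf m
  have hfn := hf n
  have hm1 : ((m:ℚ)+1) ≠ 0 := by positivity
  have hm2 : ((m:ℚ)+2) ≠ 0 := by positivity
  have hn1 : ((n:ℚ)+1) ≠ 0 := by positivity
  have hn2 : ((n:ℚ)+2) ≠ 0 := by positivity
  have F4 : ((m+n+4)! : ℚ) = ((m:ℚ)+n+4)*((m:ℚ)+n+3)*((m:ℚ)+n+2)*((m:ℚ)+n+1)*((m+n)! : ℚ) := by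
    rw [show m+n+4 = (m+n+3)+1 from rfl, Nat.factorial_succ,
        show m+n+3 = (m+n+2)+1 from rfl, Nat.factorial_succ,
        show m+n+2 = (m+n+1)+1 from rfl, Nat.factorial_succ,
        show m+n+1 = (m+n)+1 from rfl, Nat.factorial_succ]
    push_cast; ring
  have F3 : ((m+n+3)! : ℚ) = ((m:ℚ)+n+3)*((m:ℚ)+n+2)*((m:ℚ)+n+1)*((m+n)! : ℚ) := by
    rw [show m+n+3 = (m+n+2)+1 from rfl, Nat.factorial_succ,
        show m+n+2 = (m+n+1)+1 from rfl, Nat.factorial_succ,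
        show m+n+1 = (m+n)+1 from rfl, Nat.factorial_succ]
    push_cast; ring
  have F2 : ((m+n+2)! : ℚ) = ((m:ℚ)+n+2)*((m:ℚ)+n+1)*((m+n)! : ℚ) := by
    rw [show m+n+2 = (m+n+1)+1 from rfl, Nat.factorial_succ,
        show m+n+1 = (m+n)+1 from rfl, Nat.factorial_succ]
    push_cast; ring
  have Fm2 : ((m+2)! : ℚ) = ((m:ℚ)+2)*((m:ℚ)+1)*((m)! : ℚ) := by
    rw [show m+2 = (m+1)+1 from rfl, Nat.factorial_succ, Nat.factorial_succ]
    push_cast; ring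
  have Fm1 : ((m+1)! : ℚ) = ((m:ℚ)+1)*((m)! : ℚ) := by
    rw [Nat.factorial_succ]; push_cast; ring
  have Fn2 : ((n+2)! : ℚ) = ((n:ℚ)+2)*((n:ℚ)+1)*((n)! : ℚ) := by
    rw [show n+2 = (n+1)+1 from rfl, Nat.factorial_succ, Nat.factorial_succ]
    push_cast; ring
  have Fn1 : ((n+1)! : ℚ) = ((n:ℚ)+1)*((n)! : ℚ) := by
    rw [Nat.factorial_succ]; push_cast; ring
  set u : ℚ := ((m+n)! : ℚ) / (((m+2)! : ℚ) * ((n+2)! : ℚ)) with hu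
  have hbase : ∀ a b : ℚ, a = b → a^2 = b^2 := fun a b hab => by rw [hab]
  have c1 : bq (2+m) (2+n)
      = ((((m:ℚ)+n+4)*((m:ℚ)+n+3)*((m:ℚ)+n+2)*((m:ℚ)+n+1))*u)^2 := by
    rw [bq_fact', show 2+m+(2+n) = m+n+4 from by omega, show 2+m = m+2 from by omega,
      show 2+n = n+2 from by omega]
    refine hbase _ _ ?_
    rw [hu, F4]; ring
  have c2 : bq (1+m) (2+n)
      = ((((m:ℚ)+n+3)*((m:ℚ)+n+2)*((m:ℚ)+n+1)*((m:ℚ)+2))*u)^2 := by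
    rw [bq_fact', show 1+m+(2+n) = m+n+3 from by omega, show 1+m = m+1 from by omega,
      show 2+n = n+2 from by omega]
    refine hbase _ _ ?_
    rw [hu, F3, Fm2, Fm1]
    field_simp
  have c3 : bq (2+m) (1+n)
      = ((((m:ℚ)+n+3)*((m:ℚ)+n+2)*((m:ℚ)+n+1)*((n:ℚ)+2))*u)^2 := by
    rw [bq_fact', show 2+m+(1+n) = m+n+3 from by omega, show 2+m = m+2 from by omega,
      show 1+n = n+1 from by omega]
    refine hbase _ _ ?_
    rw [hu, F3, Fn2, Fn1]
    field_simp
  have c4 : bq (1+m) (1+n)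
      = ((((m:ℚ)+n+2)*((m:ℚ)+n+1)*((m:ℚ)+2)*((n:ℚ)+2))*u)^2 := by
    rw [bq_fact', show 1+m+(1+n) = m+n+2 from by omega, show 1+m = m+1 from by omega,
      show 1+n = n+1 from by omega]
    refine hbase _ _ ?_
    rw [hu, F2, Fm2, Fm1, Fn2, Fn1]
    field_simp
  have c5 : bq (2+m) n
      = ((((m:ℚ)+n+2)*((m:ℚ)+n+1)*((n:ℚ)+2)*((n:ℚ)+1))*u)^2 := by
    rw [bq_fact', show 2+m+n = m+n+2 from by omega, show 2+m = m+2 from by omega]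
    refine hbase _ _ ?_
    rw [hu, F2, Fn2]
    field_simp
  have c6 : bq m (2+n)
      = ((((m:ℚ)+n+2)*((m:ℚ)+n+1)*((m:ℚ)+2)*((m:ℚ)+1))*u)^2 := by
    rw [bq_fact', show m+(2+n) = m+n+2 from by omega, show 2+n = n+2 from by omega]
    refine hbase _ _ ?_
    rw [hu, F2, Fm2]
    field_simp
  rw [c1, c2, c3, c4, c5, c6]
  ring

/-! ### The derivative operator -/

noncomputable def Dx (i : Fin 2) (f : MvPowerSeries (Fin 2) ℚ) : MvPowerSeries (Fin 2) ℚ :=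
  fun e => ((e i : ℚ) + 1) * f (e + Finsupp.single i 1)

lemma coeff_Dx (i : Fin 2) (f : MvPowerSeries (Fin 2) ℚ) (e : Fin 2 →₀ ℕ) :
    coeff e (Dx i f) = ((e i : ℚ) + 1) * coeff (e + Finsupp.single i 1) f := rfl

lemma sum_shift1 (i : Fin 2) (e : Fin 2 →₀ ℕ) (F : (Fin 2 →₀ ℕ) × (Fin 2 →₀ ℕ) → ℚ) :
    Finset.sum (Finset.HasAntidiagonal.antidiagonal (e + Finsupp.single i 1))
        (fun p : (Fin 2 →₀ ℕ) × (Fin 2 →₀ ℕ) => ((p.1 : Fin 2 →₀ ℕ) i : ℚ) * F p)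
      = Finset.sum (Finset.HasAntidiagonal.antidiagonal e)
        (fun p : (Fin 2 →₀ ℕ) × (Fin 2 →₀ ℕ) =>
          (((p.1 : Fin 2 →₀ ℕ) i : ℚ) + 1) * F (p.1 + Finsupp.single i 1, p.2)) := by
  classical
  rw [← Finset.sum_filter_of_ne
    (p := fun p : (Fin 2 →₀ ℕ) × (Fin 2 →₀ ℕ) => (p.1 : Fin 2 →₀ ℕ) i ≠ 0)
    (by intro x _ h hx; simp only [hx, Nat.cast_zero, zero_mul] at h; exact h rfl)]
  refine Finset.sum_nbij' (i := fun p => ((p.1 : Fin 2 →₀ ℕ) - Finsupp.single i 1, p.2))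
    (j := fun p => ((p.1 : Fin 2 →₀ ℕ) + Finsupp.single i 1, p.2)) ?_ ?_ ?_ ?_ ?_
  · rintro ⟨p1, p2⟩ hp
    simp only [Finset.mem_filter, Finset.HasAntidiagonal.mem_antidiagonal] at hp ⊢
    obtain ⟨h1, h2⟩ := hp
    have hle : Finsupp.single i 1 ≤ p1 := Finsupp.single_le_iff.2 (Nat.one_le_iff_ne_zero.2 h2)
    have hc := tsub_add_cancel_of_le hle
    apply add_right_cancel (b := Finsupp.single i 1)
    calc p1 - Finsupp.single i 1 + p2 + Finsupp.single i 1
        = p1 - Finsupp.single i 1 + Finsupp.single i 1 + p2 := add_right_comm _ _ _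
      _ = p1 + p2 := by rw [hc]
      _ = e + Finsupp.single i 1 := h1
  · rintro ⟨p1, p2⟩ hp
    simp only [Finset.mem_filter, Finset.HasAntidiagonal.mem_antidiagonal] at hp ⊢
    constructor
    · rw [← hp]; abel
    · simp
  · rintro ⟨p1, p2⟩ hp
    simp only [Finset.mem_filter, Finset.HasAntidiagonal.mem_antidiagonal] at hp
    have hle : Finsupp.single i 1 ≤ p1 := Finsupp.single_le_iff.2 (Nat.one_le_iff_ne_zero.2 hp.2)
    simp [tsub_add_cancel_of_le hle]
  · rintro ⟨p1, p2⟩ _; simp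
  · rintro ⟨p1, p2⟩ hp
    simp only [Finset.mem_filter, Finset.HasAntidiagonal.mem_antidiagonal] at hp
    have hle : Finsupp.single i 1 ≤ p1 := Finsupp.single_le_iff.2 (Nat.one_le_iff_ne_zero.2 hp.2)
    have h1 : ((p1 - Finsupp.single i 1 : Fin 2 →₀ ℕ)) i = p1 i - 1 := by
      rw [Finsupp.tsub_apply, Finsupp.single_eq_same]
    dsimp only
    rw [tsub_add_cancel_of_le hle, h1]
    have hge : 1 ≤ p1 i := Nat.one_le_iff_ne_zero.2 hp.2
    have hcast : ((p1 i - 1 : ℕ) : ℚ) = (p1 i : ℚ) - 1 := by push_cast [hge]; ring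
    rw [hcast]; ring

lemma sum_shift2 (i : Fin 2) (e : Fin 2 →₀ ℕ) (F : (Fin 2 →₀ ℕ) × (Fin 2 →₀ ℕ) → ℚ) :
    Finset.sum (Finset.HasAntidiagonal.antidiagonal (e + Finsupp.single i 1))
        (fun p : (Fin 2 →₀ ℕ) × (Fin 2 →₀ ℕ) => ((p.2 : Fin 2 →₀ ℕ) i : ℚ) * F p)
      = Finset.sum (Finset.HasAntidiagonal.antidiagonal e)
        (fun p : (Fin 2 →₀ ℕ) × (Fin 2 →₀ ℕ) =>
          (((p.2 : Fin 2 →₀ ℕ) i : ℚ) + 1) * F (p.1, p.2 + Finsupp.single i 1)) := by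
  classical
  rw [← Finset.sum_filter_of_ne
    (p := fun p : (Fin 2 →₀ ℕ) × (Fin 2 →₀ ℕ) => (p.2 : Fin 2 →₀ ℕ) i ≠ 0)
    (by intro x _ h hx; simp only [hx, Nat.cast_zero, zero_mul] at h; exact h rfl)]
  refine Finset.sum_nbij' (i := fun p => (p.1, (p.2 : Fin 2 →₀ ℕ) - Finsupp.single i 1))
    (j := fun p => (p.1, (p.2 : Fin 2 →₀ ℕ) + Finsupp.single i 1)) ?_ ?_ ?_ ?_ ?_
  · rintro ⟨p1, p2⟩ hp
    simp only [Finset.mem_filter, Finset.HasAntidiagonal.mem_antidiagonal] at hp ⊢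
    obtain ⟨h1, h2⟩ := hp
    have hle : Finsupp.single i 1 ≤ p2 := Finsupp.single_le_iff.2 (Nat.one_le_iff_ne_zero.2 h2)
    have hc := tsub_add_cancel_of_le hle
    apply add_right_cancel (b := Finsupp.single i 1)
    calc p1 + (p2 - Finsupp.single i 1) + Finsupp.single i 1
        = p1 + (p2 - Finsupp.single i 1 + Finsupp.single i 1) := add_assoc _ _ _
      _ = p1 + p2 := by rw [hc]
      _ = e + Finsupp.single i 1 := h1
  · rintro ⟨p1, p2⟩ hp
    simp only [Finset.mem_filter, Finset.HasAntidiagonal.mem_antidiagonal] at hp ⊢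
    constructor
    · rw [← hp]; abel
    · simp
  · rintro ⟨p1, p2⟩ hp
    simp only [Finset.mem_filter, Finset.HasAntidiagonal.mem_antidiagonal] at hp
    have hle : Finsupp.single i 1 ≤ p2 := Finsupp.single_le_iff.2 (Nat.one_le_iff_ne_zero.2 hp.2)
    simp [tsub_add_cancel_of_le hle]
  · rintro ⟨p1, p2⟩ _; simp
  · rintro ⟨p1, p2⟩ hp
    simp only [Finset.mem_filter, Finset.HasAntidiagonal.mem_antidiagonal] at hp
    have hle : Finsupp.single i 1 ≤ p2 := Finsupp.single_le_iff.2 (Nat.one_le_iff_ne_zero.2 hp.2)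
    have h1 : ((p2 - Finsupp.single i 1 : Fin 2 →₀ ℕ)) i = p2 i - 1 := by
      rw [Finsupp.tsub_apply, Finsupp.single_eq_same]
    dsimp only
    rw [tsub_add_cancel_of_le hle, h1]
    have hge : 1 ≤ p2 i := Nat.one_le_iff_ne_zero.2 hp.2
    have hcast : ((p2 i - 1 : ℕ) : ℚ) = (p2 i : ℚ) - 1 := by push_cast [hge]; ring
    rw [hcast]; ring

lemma Dx_mul (i : Fin 2) (f g : MvPowerSeries (Fin 2) ℚ) :
    Dx i (f * g) = Dx i f * g + f * Dx i g := by
  classical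
  ext e
  rw [map_add, coeff_Dx, coeff_mul, coeff_mul, coeff_mul, Finset.mul_sum]
  have key : ∀ p ∈ Finset.HasAntidiagonal.antidiagonal (e + Finsupp.single i 1),
      ((e i : ℚ) + 1) * (coeff (p : (Fin 2 →₀ ℕ) × (Fin 2 →₀ ℕ)).1 f * coeff p.2 g)
        = ((p.1 : Fin 2 →₀ ℕ) i : ℚ) * (coeff p.1 f * coeff p.2 g)
          + ((p.2 : Fin 2 →₀ ℕ) i : ℚ) * (coeff p.1 f * coeff p.2 g) := by
    rintro ⟨p1, p2⟩ hp
    simp only [Finset.HasAntidiagonal.mem_antidiagonal] at hp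
    have h1 : p1 i + p2 i = e i + 1 := by
      have := congrArg (fun v : Fin 2 →₀ ℕ => v i) hp
      simpa using this
    have h2 : ((p1 i : ℚ) + p2 i) = (e i : ℚ) + 1 := by exact_mod_cast h1
    dsimp only
    rw [← h2]; ring
  rw [Finset.sum_congr rfl key, Finset.sum_add_distrib]
  rw [sum_shift1 i e (fun p => coeff p.1 f * coeff p.2 g),
      sum_shift2 i e (fun p => coeff p.1 f * coeff p.2 g)]
  congr 1
  · apply Finset.sum_congr rfl
    rintro ⟨p1, p2⟩ _
    rw [coeff_Dx]; ring
  · apply Finset.sum_congr rfl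
    rintro ⟨p1, p2⟩ _
    rw [coeff_Dx]; ring

lemma Dx_add (i : Fin 2) (f g : MvPowerSeries (Fin 2) ℚ) :
    Dx i (f + g) = Dx i f + Dx i g := by
  ext e
  rw [map_add, coeff_Dx, coeff_Dx, coeff_Dx, map_add]
  ring

lemma Dx_sub (i : Fin 2) (f g : MvPowerSeries (Fin 2) ℚ) :
    Dx i (f - g) = Dx i f - Dx i g := by
  ext e
  rw [map_sub, coeff_Dx, coeff_Dx, coeff_Dx, map_sub]
  ring

lemma Dx_one (i : Fin 2) : Dx i (1 : MvPowerSeries (Fin 2) ℚ) = 0 := by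
  ext e
  rw [coeff_Dx, coeff_one, if_neg, map_zero, mul_zero]
  intro hh
  have := congrArg (fun v : Fin 2 →₀ ℕ => v i) hh
  simp at this

lemma Dx_X_self (i : Fin 2) : Dx i (X i : MvPowerSeries (Fin 2) ℚ) = 1 := by
  ext e
  rw [coeff_Dx, coeff_X, coeff_one]
  by_cases he : e = 0
  · subst he; simp
  · rw [if_neg he, if_neg, mul_zero]
    intro hh
    exact he (add_eq_right.1 hh)

lemma Dx_X_ne (i j : Fin 2) (h : j ≠ i) : Dx i (X j : MvPowerSeries (Fin 2) ℚ) = 0 := by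
  ext e
  rw [coeff_Dx, coeff_X, if_neg, map_zero, mul_zero]
  intro hh
  have := congrArg (fun v : Fin 2 →₀ ℕ => v i) hh
  simp [Finsupp.single_eq_of_ne' h] at this

/-! ### The series W and Δ -/

noncomputable def W : MvPowerSeries (Fin 2) ℚ := fun e => bq (e 0) (e 1)

lemma coeff_W (e : Fin 2 →₀ ℕ) : coeff e W = bq (e 0) (e 1) := rfl

lemma coeff_W' (i j : Fin 2) (h : (i = 0 ∧ j = 1) ∨ (i = 1 ∧ j = 0)) (e : Fin 2 →₀ ℕ) :
    coeff e W = bq (e i) (e j) := by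
  rcases h with ⟨hi, hj⟩ | ⟨hi, hj⟩ <;> subst hi <;> subst hj
  · rfl
  · rw [coeff_W, bq_symm]

lemma coeff_X_mul' (i : Fin 2) (f : MvPowerSeries (Fin 2) ℚ) (e : Fin 2 →₀ ℕ) :
    coeff e (X i * f) = if 1 ≤ e i then coeff (e - Finsupp.single i 1) f else 0 := by
  have hX : (X i : MvPowerSeries (Fin 2) ℚ) = monomial (Finsupp.single i 1) 1 := rfl
  rw [hX, coeff_monomial_mul]
  simp only [one_mul, Finsupp.single_le_iff]

noncomputable def Dl : MvPowerSeries (Fin 2) ℚ :=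
  1 - 2 * X 0 - 2 * X 1 - 2 * X 0 * X 1 + (X 0) ^ 2 + (X 1) ^ 2

lemma Dl_def : Dl = 1 - 2 * X 0 - 2 * X 1 - 2 * X 0 * X 1 + (X 0) ^ 2 + (X 1) ^ 2 := rfl

lemma Dl_symm (i j : Fin 2) (h : (i = 0 ∧ j = 1) ∨ (i = 1 ∧ j = 0)) :
    Dl = 1 - 2 * X i - 2 * X j - 2 * X i * X j + (X i) ^ 2 + (X j) ^ 2 := by
  rcases h with ⟨hi, hj⟩ | ⟨hi, hj⟩ <;> subst hi <;> subst hj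
  · rfl
  · unfold Dl; ring

set_option maxHeartbeats 1600000 in
lemma lemR (i j : Fin 2) (h : (i = 0 ∧ j = 1) ∨ (i = 1 ∧ j = 0)) :
    Dl * Dx i W = (1 + X j - X i) * W := by
  have hij : i ≠ j := by rcases h with ⟨hi,hj⟩|⟨hi,hj⟩ <;> subst hi <;> subst hj <;> decide
  have hW := coeff_W' i j h
  ext e
  have hexp : Dl * Dx i W
      = Dx i W - X i * Dx i W - X i * Dx i W - X j * Dx i W - X j * Dx i W
        - X i * (X j * Dx i W) - X i * (X j * Dx i W) + X i * (X i * Dx i W)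
        + X j * (X j * Dx i W) := by
    rw [Dl_symm i j h]; ring
  have hexp2 : (1 + X j - X i) * W = W + X j * W - X i * W := by ring
  rw [hexp, hexp2]
  simp only [map_add, map_sub, coeff_X_mul', coeff_Dx, hW]
  simp only [Finsupp.tsub_apply, Finsupp.add_apply, Finsupp.single_eq_same,
    Finsupp.single_eq_of_ne hij, Finsupp.single_eq_of_ne (Ne.symm hij), add_zero, Nat.sub_zero]
  clear hexp hexp2 hW
  generalize e i = m
  generalize e j = n
  rcases m with _ | m <;> rcases n with _ | n
  · norm_num [bq_zero_right, bq_zero_left]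
  · rcases n with _ | n <;>
      norm_num [bq_zero_right, bq_zero_left, bq_one_right, bq_one_left] <;>
      push_cast <;> ring
  · rcases m with _ | m <;>
      norm_num [bq_zero_right, bq_zero_left, Nat.add_sub_cancel] <;>
      push_cast <;> ring
  · rcases n with _ | n
    · rcases m with _ | m <;>
        norm_num [bq_zero_right, bq_zero_left, bq_one_right, bq_one_left,
          Nat.add_sub_cancel] <;>
        push_cast <;> ring
    · norm_num [bq_zero_right, bq_zero_left, bq_one_right, bq_one_left]
      simp only [show m+1+1 = 2+m from by omega, show n+1+1 = 2+n from by omega,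
        show m+1 = 1+m from by omega, show n+1 = 1+n from by omega,
        show 1+m+1 = 2+m from by omega, show 1+n+1 = 2+n from by omega]
      have hterm : (if 1 ≤ m then (((m - 1 : ℕ) : ℚ) + 1) * bq (m - 1 + 1) (2 + n) else 0)
          = (m:ℚ) * bq m (2+n) := by
        rcases m with _ | m
        · simp
        · rw [if_pos (by omega), Nat.add_sub_cancel]
          push_cast; ring
      linear_combination hterm + key6 m n

lemma Dx_Dl (i j : Fin 2) (h : (i = 0 ∧ j = 1) ∨ (i = 1 ∧ j = 0)) :
    Dx i Dl = X i + X i - X j - X j - 1 - 1 := by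
  have hij : i ≠ j := by rcases h with ⟨hi,hj⟩|⟨hi,hj⟩ <;> subst hi <;> subst hj <;> decide
  have h0 : Dl = 1 - (X i + X i) - (X j + X j) - (X i * (X j + X j)) + X i * X i
      + X j * X j := by
    rw [Dl_symm i j h]; ring
  rw [h0]
  simp only [Dx_add, Dx_sub, Dx_mul, Dx_one, Dx_X_self, Dx_X_ne i j (Ne.symm hij),
    Dx_X_ne j i hij]
  ring

lemma hVzero (i j : Fin 2) (h : (i = 0 ∧ j = 1) ∨ (i = 1 ∧ j = 0)) :
    Dx i (W * W * Dl) = 0 := by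
  rw [Dx_mul, Dx_mul, Dx_Dl i j h]
  linear_combination (2 * W) * lemR i j h

lemma V_eq_one : W * W * Dl = 1 := by
  have h01 := hVzero 0 1 (Or.inl ⟨rfl, rfl⟩)
  have h10 := hVzero 1 0 (Or.inr ⟨rfl, rfl⟩)
  ext e
  by_cases he : e = 0
  · subst he
    rw [coeff_zero_eq_constantCoeff, map_mul, map_mul]
    have hw : constantCoeff W = 1 := by
      have h1 : constantCoeff W = bq 0 0 := rfl
      rw [h1]; simp [bq]
    rw [hw]
    simp [Dl_def]
  · obtain ⟨i, hi⟩ : ∃ i : Fin 2, e i ≠ 0 := by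
      by_contra hc
      push_neg at hc
      exact he (Finsupp.ext fun a => hc a)
    have hVi : Dx i (W * W * Dl) = 0 := by fin_cases i <;> assumption
    have hle : Finsupp.single i 1 ≤ e := Finsupp.single_le_iff.2 (Nat.one_le_iff_ne_zero.2 hi)
    have h2 := congrArg (coeff (e - Finsupp.single i 1)) hVi
    rw [coeff_Dx, map_zero, tsub_add_cancel_of_le hle] at h2
    have hne : (((e - Finsupp.single i 1 : Fin 2 →₀ ℕ) i : ℚ) + 1) ≠ 0 := by positivity
    have h3 := (mul_eq_zero.1 h2).resolve_left hne
    rw [h3, coeff_one, if_neg he]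

/-- As a formal power series in two variables,
`1/√(1 - 2x - 2y - 2xy + x² + y²) = Σ_{m,n≥0} binom(m+n,m)² xᵐyⁿ`,
where `√Δ` is the square root of `Δ` with constant term 1 and `Z` is its
multiplicative inverse. -/
theorem stmt_4 (s Z : MvPowerSeries (Fin 2) ℚ)
    (hs : s ^ 2 = 1 - 2 * X 0 - 2 * X 1 - 2 * X 0 * X 1 + (X 0) ^ 2 + (X 1) ^ 2)
    (hs0 : constantCoeff s = 1)
    (hZ : Z * s = 1) :
    ∀ m n : ℕ,
      coeff (Finsupp.single 0 m + Finsupp.single 1 n) Z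
        = ((m + n).choose m : ℚ) ^ 2 := by
  intro m n
  have hW1 : W * W * Dl = 1 := V_eq_one
  have hZ1 : Z * Z * Dl = 1 := by
    have h1 : Z * Z * Dl = (Z * s) ^ 2 := by rw [Dl_def, ← hs]; ring
    rw [h1, hZ, one_pow]
  have hDl0 : Dl ≠ 0 := by
    intro h0
    have := congrArg (constantCoeff) h0
    simp [Dl_def] at this
  have hcancel : Z * Z = W * W := mul_right_cancel₀ hDl0 (hZ1.trans hW1.symm)
  have hfac : (Z - W) * (Z + W) = 0 := by linear_combination hcancel
  have hcZ : constantCoeff Z = 1 := by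
    have := congrArg (constantCoeff) hZ
    rw [map_mul, hs0, mul_one, map_one] at this
    exact this
  have hcW : constantCoeff W = 1 := by
    have h1 : constantCoeff W = bq 0 0 := rfl
    rw [h1]; simp [bq]
  have hZW : Z = W := by
    rcases mul_eq_zero.1 hfac with h1 | h1
    · exact sub_eq_zero.1 h1
    · exfalso
      have := congrArg (constantCoeff) h1
      rw [map_add, hcZ, hcW, map_zero] at this
      norm_num at this
  have e0 : ((Finsupp.single (0 : Fin 2) m + Finsupp.single 1 n : Fin 2 →₀ ℕ)) 0 = m := by
    simp [Finsupp.single_apply]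
  have e1 : ((Finsupp.single (0 : Fin 2) m + Finsupp.single 1 n : Fin 2 →₀ ℕ)) 1 = n := by
    simp [Finsupp.single_apply]
  rw [hZW, coeff_W, e0, e1]
  rfl
end

section
/- Suppose α ≠ 1 and f is a polynomial (or suitably analytic function). Then (v s³/((1-s)³(1-v-s))) ⊙_s f(s)|_{s=1} = (x²/SP²)(f(u/x) - f(1)) - (x/SP)·f'(1) - f''(1)/2, where x = u(1-v), SP = uv, and the join is the restricted Hadamard product, using 1/(1-v) = u/x. -/
set_option maxHeartbeats 1000000

open PowerSeries

noncomputable def gq (v : ℝ) (n : ℕ) : ℝ :=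
  (-3*v^2+3*v-1)/v^2 + (3*v-1)/v*(n+1) - (n+1)*(n+2)/2 + (1-v)^2/v^2 * ((1-v)⁻¹)^n

lemma coeffG (v : ℝ) (hv : v ≠ 0) (hv1 : v ≠ 1) (G : PowerSeries ℝ)
    (hG : G * ((1 - PowerSeries.X) ^ 3 * (PowerSeries.C (1 - v) - PowerSeries.X))
        = PowerSeries.C v * PowerSeries.X ^ 3) :
    ∀ n, PowerSeries.coeff n G = gq v n := by
  have hw : (1:ℝ) - v ≠ 0 := sub_ne_zero.2 (Ne.symm hv1)
  have e1 : (3 * C (1-v) + 1 : PowerSeries ℝ) = C (3*(1-v) + 1) := by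
    simp only [map_add, map_mul, map_one, map_ofNat]
  have e2 : (3 * C (1-v) + 3 : PowerSeries ℝ) = C (3*(1-v) + 3) := by
    simp only [map_add, map_mul, map_ofNat]
  have e3 : (C (1-v) + 3 : PowerSeries ℝ) = C ((1-v) + 3) := by
    simp only [map_add, map_ofNat]
  have hHQ : (PowerSeries.mk (gq v))
        * ((1 - PowerSeries.X) ^ 3 * (PowerSeries.C (1 - v) - PowerSeries.X))
      = PowerSeries.C v * PowerSeries.X ^ 3 := by
    have hstep : (PowerSeries.mk (gq v))
          * ((1 - PowerSeries.X) ^ 3 * (PowerSeries.C (1 - v) - PowerSeries.X))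
        = C (1-v) * (PowerSeries.mk (gq v))
          - (3 * C (1-v) + 1) * ((PowerSeries.mk (gq v)) * X ^ 1)
          + (3 * C (1-v) + 3) * ((PowerSeries.mk (gq v)) * X ^ 2)
          - (C (1-v) + 3) * ((PowerSeries.mk (gq v)) * X ^ 3)
          + (PowerSeries.mk (gq v)) * X ^ 4 := by ring
    rw [hstep, e1, e2, e3]
    generalize hc1 : (3:ℝ)*(1-v)+1 = c1
    generalize hc2 : (3:ℝ)*(1-v)+3 = c2
    generalize hc3 : (1:ℝ)-v+3 = c3
    generalize hc0 : (1:ℝ)-v = c0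
    ext n
    rcases n with _|_|_|_|m
    · simp only [map_add, map_sub, PowerSeries.coeff_C_mul, PowerSeries.coeff_mul_X_pow',
        PowerSeries.coeff_mk, PowerSeries.coeff_X_pow, PowerSeries.coeff_C,
        PowerSeries.coeff_zero_eq_constantCoeff, PowerSeries.constantCoeff_mk, gq]
      norm_num [-mul_eq_zero]
      rw [← hc0]
      field_simp
      ring
    · simp only [map_add, map_sub, PowerSeries.coeff_C_mul, PowerSeries.coeff_mul_X_pow',
        PowerSeries.coeff_mk, PowerSeries.coeff_X_pow, PowerSeries.coeff_C,
        PowerSeries.coeff_zero_eq_constantCoeff, PowerSeries.constantCoeff_mk, gq]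
      norm_num [-mul_eq_zero]
      rw [← hc0, ← hc1]
      field_simp
      ring
    · simp only [map_add, map_sub, PowerSeries.coeff_C_mul, PowerSeries.coeff_mul_X_pow',
        PowerSeries.coeff_mk, PowerSeries.coeff_X_pow, PowerSeries.coeff_C,
        PowerSeries.coeff_zero_eq_constantCoeff, PowerSeries.constantCoeff_mk, gq]
      norm_num [-mul_eq_zero]
      rw [← hc0, ← hc1, ← hc2]
      field_simp
      ring
    · simp only [map_add, map_sub, PowerSeries.coeff_C_mul, PowerSeries.coeff_mul_X_pow',
        PowerSeries.coeff_mk, PowerSeries.coeff_X_pow, PowerSeries.coeff_C,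
        PowerSeries.coeff_zero_eq_constantCoeff, PowerSeries.constantCoeff_mk, gq]
      norm_num [-mul_eq_zero]
      rw [← hc0, ← hc1, ← hc2, ← hc3]
      field_simp
      ring
    · have h1 : (1 ≤ m + 4) := by omega
      have h2 : (2 ≤ m + 4) := by omega
      have h3 : (3 ≤ m + 4) := by omega
      have h4 : (4 ≤ m + 4) := by omega
      have hne3 : (m + 4 ≠ 3) := by omega
      simp only [map_add, map_sub, PowerSeries.coeff_C_mul, PowerSeries.coeff_mul_X_pow',
        PowerSeries.coeff_mk, PowerSeries.coeff_X_pow, PowerSeries.coeff_C,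
        if_pos h1, if_pos h2, if_pos h3, if_pos h4, if_neg hne3,
        show m + 4 - 1 = m + 3 from rfl, show m + 4 - 2 = m + 2 from rfl,
        show m + 4 - 3 = m + 1 from rfl, show m + 4 - 4 = m from rfl, gq]
      rw [← hc0, ← hc1, ← hc2, ← hc3]
      push_cast
      simp only [pow_succ]
      generalize ((1:ℝ)-v)⁻¹ ^ m = t
      field_simp
      ring
  have hne : ((1 - PowerSeries.X) ^ 3 * (PowerSeries.C (1 - v) - PowerSeries.X)
      : PowerSeries ℝ) ≠ 0 := by
    intro h
    apply hw
    have := congrArg (PowerSeries.constantCoeff) h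
    simpa using this
  have hGH : G = PowerSeries.mk (gq v) := mul_right_cancel₀ hne (hG.trans hHQ.symm)
  intro n
  rw [hGH, PowerSeries.coeff_mk]



/-- For a polynomial `f`, the restricted Hadamard join of
`v s³/((1-s)³(1-v-s))` (expanded as a power series `G` in `s`) with `f(s)` at
`s = 1` equals `(x²/SP²)(f(u/x) - f(1)) - (x/SP)f'(1) - f''(1)/2`, where
`x = u(1-v)` and `SP = uv`. -/
theorem stmt_15 (u v : ℝ) (hu : u ≠ 0) (hv : v ≠ 0) (hv1 : v ≠ 1)
    (f : Polynomial ℝ) (G : PowerSeries ℝ)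
    (hG : G * ((1 - PowerSeries.X) ^ 3 * (PowerSeries.C (1 - v) - PowerSeries.X))
        = PowerSeries.C v * PowerSeries.X ^ 3) :
    ∑' n : ℕ, PowerSeries.coeff n G * f.coeff n
      = (u * (1 - v)) ^ 2 / (u * v) ^ 2
            * (f.eval (u / (u * (1 - v))) - f.eval 1)
        - (u * (1 - v)) / (u * v) * (Polynomial.derivative f).eval 1
        - (Polynomial.derivative (Polynomial.derivative f)).eval 1 / 2 := by
  have hcoeff := coeffG v hv hv1 G hG
  have hw : (1:ℝ) - v ≠ 0 := sub_ne_zero.2 (Ne.symm hv1)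
  have halpha : u / (u * (1 - v)) = (1 - v)⁻¹ := by field_simp
  induction f using Polynomial.induction_on' with
  | add p q hp hq =>
      have sp : Summable (fun n => PowerSeries.coeff n G * p.coeff n) :=
        summable_of_ne_finset_zero (s := p.support) (fun b hb => by
          simp [Polynomial.notMem_support_iff.mp hb])
      have sq : Summable (fun n => PowerSeries.coeff n G * q.coeff n) :=
        summable_of_ne_finset_zero (s := q.support) (fun b hb => by
          simp [Polynomial.notMem_support_iff.mp hb])
      have : ∑' n : ℕ, PowerSeries.coeff n G * (p + q).coeff n
          = (∑' n : ℕ, PowerSeries.coeff n G * p.coeff n)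
            + ∑' n : ℕ, PowerSeries.coeff n G * q.coeff n := by
        rw [← Summable.tsum_add sp sq]
        congr 1
        ext n
        simp [Polynomial.coeff_add]
        ring
      rw [this, hp, hq]
      simp only [Polynomial.eval_add, Polynomial.derivative_add]
      ring
  | monomial k a =>
      rw [tsum_eq_single k (fun n hn => by
        simp [Polynomial.coeff_monomial, Ne.symm hn])]
      rw [Polynomial.coeff_monomial, if_pos rfl, hcoeff k]
      simp only [Polynomial.eval_monomial, Polynomial.derivative_monomial,
        Polynomial.eval_monomial, one_pow, mul_one, halpha]
      rcases k with _|_|k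
      · norm_num [gq, -mul_eq_zero]
        field_simp
        ring
      · norm_num [gq, -mul_eq_zero]
        field_simp
        ring
      · simp only [gq]
        push_cast
        field_simp
        ring
end

section
/- With x = u(1-v), y = v(1-u), SP = uv, Z = 1/(1-u-v), I = u²/(1-u)², and P'(x,y) = (xy/((1-x)²-y))·(y/(1-x-y))²·(x(1-x)²/((1-x)²-y) + xy/(1-y)), the identity I · P'(u,y) · (SP·Z + v/(1-x)) = (1+u)(1+v)·SP⁴·Z³/((1-x)(1-y)) holds in the field of rational functions in u and v. -/
set_option maxHeartbeats 1600000 in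
/-- With `x = u(1-v)`, `y = v(1-u)`, `SP = uv`, `Z = 1/(1-u-v)`,
`I = u²/(1-u)²`, and
`P'(x,y) = (xy/((1-x)²-y))·(y/(1-x-y))²·(x(1-x)²/((1-x)²-y) + xy/(1-y))`,
the identity `I·P'(u,y)·(SP·Z + v/(1-x)) = (1+u)(1+v)SP⁴Z³/((1-x)(1-y))`
holds (as rational functions of `u,v`, i.e. whenever no denominator
vanishes). -/
theorem stmt_19 {K : Type*} [Field K] (u v : K)
    (h1 : (1 : K) - u ≠ 0)
    (h2 : (1 - u) ^ 2 - v * (1 - u) ≠ 0)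
    (h3 : (1 : K) - u - v * (1 - u) ≠ 0)
    (h4 : (1 : K) - v * (1 - u) ≠ 0)
    (h5 : (1 : K) - u - v ≠ 0)
    (h6 : (1 : K) - u * (1 - v) ≠ 0) :
    (u ^ 2 / (1 - u) ^ 2)
        * ((u * (v * (1 - u)) / ((1 - u) ^ 2 - v * (1 - u)))
            * ((v * (1 - u)) / (1 - u - v * (1 - u))) ^ 2
            * (u * (1 - u) ^ 2 / ((1 - u) ^ 2 - v * (1 - u))
                + u * (v * (1 - u)) / (1 - v * (1 - u))))
        * ((u * v) * (1 / (1 - u - v)) + v / (1 - u * (1 - v)))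
      = (1 + u) * (1 + v) * (u * v) ^ 4 * (1 / (1 - u - v)) ^ 3
          / ((1 - u * (1 - v)) * (1 - v * (1 - u))) := by
  have hv : (1:K) - v ≠ 0 := fun h => h3 (by rw [show (1:K)-u-v*(1-u) = (1-u)*(1-v) by ring, h, mul_zero])
  rw [show ((1:K)-u)^2 - v*(1-u) = (1-u)*(1-u-v) by ring,
      show (1:K)-u-v*(1-u) = (1-u)*(1-v) by ring]
  simp only [mul_one_div, div_pow]
  rw [div_add_div _ _ (mul_ne_zero h1 h5) h4, div_add_div _ _ h5 h6]
  simp only [div_mul_eq_mul_div, mul_div_assoc', div_div]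
  rw [div_eq_div_iff
        (mul_ne_zero (mul_ne_zero (pow_ne_zero 2 h1)
          (mul_ne_zero (mul_ne_zero (mul_ne_zero h1 h5) (pow_ne_zero 2 (mul_ne_zero h1 hv)))
            (mul_ne_zero (mul_ne_zero h1 h5) h4))) (mul_ne_zero h5 h6))
        (mul_ne_zero (pow_ne_zero 3 h5) (mul_ne_zero h6 h4))]
  ring
end
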